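/- For every continuously differentiable function f on [0,R] with f(R)=0, one has ∫₀^R |f'(r)|² r dr ≥ (1/(4R)) ∫₀^R |f(r)|² dr. (Note ∫₀^R (|f(r)|²/r) r dr = ∫₀^R |f(r)|² dr.) -/

import Mathlib

open MeasureTheory intervalIntegral

/-- One-dimensional weighted Hardy–Poincaré inequality: for `f` of class `C¹`
with `f R = 0`, `∫₀ᴿ |f'(r)|² r dr ≥ (1/(4R)) ∫₀ᴿ |f(r)|² dr`. -/
theorem stmt_0 (R : ℝ) (hR : 0 < R) (f : ℝ → ℂ)
    (hf : ContDiff ℝ 1 f) (hfR : f R = 0) :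
    (∫ r in (0:ℝ)..R, ‖deriv f r‖ ^ 2 * r) ≥
      (1 / (4 * R)) * ∫ r in (0:ℝ)..R, ‖f r‖ ^ 2 := by
  have hfd : Differentiable ℝ f := hf.differentiable one_ne_zero
  have hfc : Continuous f := hf.continuous
  have hdc : Continuous (deriv f) := hf.continuous_deriv le_rfl
  have hinc : Continuous (fun r => (inner ℝ (deriv f r) (f r) : ℝ)) := hdc.inner hfc
  set c : ℝ := 1 / (2 * R) with hc
  have hcpos : 0 < c := by positivity
  set A := ∫ r in (0:ℝ)..R, ‖deriv f r‖ ^ 2 * r with hA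
  set B := ∫ r in (0:ℝ)..R, ‖f r‖ ^ 2 with hB
  set C := ∫ r in (0:ℝ)..R, ‖f r‖ ^ 2 * r with hC
  set D := ∫ r in (0:ℝ)..R, ((inner ℝ (deriv f r) (f r) : ℝ)) * r with hD
  -- integration by parts : 2 * D = -B
  have hIBP : ∫ r in (0:ℝ)..R, r * (2 * (inner ℝ (deriv f r) (f r) : ℝ))
      = R * ‖f R‖^2 - 0 * ‖f 0‖^2 - ∫ r in (0:ℝ)..R, 1 * ‖f r‖^2 := by
    apply intervalIntegral.integral_mul_deriv_eq_deriv_mul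
    · intro x _; exact hasDerivAt_id x
    · intro x _
      have h1 : HasDerivAt f (deriv f x) x := (hfd x).hasDerivAt
      have h2 := h1.inner ℝ h1
      have : (inner ℝ (f x) (deriv f x) + inner ℝ (deriv f x) (f x) : ℝ)
          = 2 * (inner ℝ (deriv f x) (f x) : ℝ) := by
        rw [real_inner_comm]; ring
      rw [this] at h2
      have heq : (fun t => (inner ℝ (f t) (f t) : ℝ)) = fun t => ‖f t‖^2 := by
        funext t; exact real_inner_self_eq_norm_sq (f t)
      rwa [heq] at h2
    · exact continuous_const.intervalIntegrable 0 R
    · exact (continuous_const.mul hinc).intervalIntegrable 0 R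
  have h2D : 2 * D = -B := by
    have e1 : ∫ r in (0:ℝ)..R, r * (2 * (inner ℝ (deriv f r) (f r) : ℝ))
        = 2 * D := by
      rw [hD, ← intervalIntegral.integral_const_mul]
      apply intervalIntegral.integral_congr
      intro x _; ring
    have e2 : ∫ r in (0:ℝ)..R, (1:ℝ) * ‖f r‖^2 = B := by
      rw [hB]; apply intervalIntegral.integral_congr; intro x _; ring
    rw [e1, e2, hfR] at hIBP
    simpa using hIBP
  -- expansion and nonnegativity
  have key : 0 ≤ A + (2*c) * D + c^2 * C := by
    have h0 : 0 ≤ ∫ r in (0:ℝ)..R, ‖deriv f r + c • f r‖^2 * r := by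
      apply intervalIntegral.integral_nonneg hR.le
      intro u hu
      have : 0 ≤ u := hu.1
      positivity
    have hexp : ∀ r : ℝ, ‖deriv f r + c • f r‖^2 * r
        = ‖deriv f r‖^2 * r + (2*c) * ((inner ℝ (deriv f r) (f r) : ℝ) * r)
          + c^2 * (‖f r‖^2 * r) := by
      intro r
      rw [norm_add_sq_real, real_inner_smul_right, norm_smul]
      simp [Real.norm_eq_abs, mul_pow, sq_abs]
      ring
    have hsplit : (∫ r in (0:ℝ)..R, ‖deriv f r + c • f r‖^2 * r)
        = A + (2*c) * D + c^2 * C := by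
      have hi1 : IntervalIntegrable (fun r => ‖deriv f r‖^2 * r) volume 0 R :=
        (((hdc.norm.pow 2).mul continuous_id)).intervalIntegrable 0 R
      have hi2 : IntervalIntegrable (fun r => (2*c) * ((inner ℝ (deriv f r) (f r) : ℝ) * r)) volume 0 R :=
        (continuous_const.mul (hinc.mul continuous_id)).intervalIntegrable 0 R
      have hi3 : IntervalIntegrable (fun r => c^2 * (‖f r‖^2 * r)) volume 0 R :=
        (continuous_const.mul ((hfc.norm.pow 2).mul continuous_id)).intervalIntegrable 0 R
      calc (∫ r in (0:ℝ)..R, ‖deriv f r + c • f r‖^2 * r)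
          = ∫ r in (0:ℝ)..R, (‖deriv f r‖^2 * r + (2*c) * ((inner ℝ (deriv f r) (f r) : ℝ) * r)
              + c^2 * (‖f r‖^2 * r)) := by
            apply intervalIntegral.integral_congr; intro x _; exact hexp x
        _ = A + (2*c) * D + c^2 * C := by
            rw [intervalIntegral.integral_add (hi1.add hi2) hi3,
              intervalIntegral.integral_add hi1 hi2,
              intervalIntegral.integral_const_mul, intervalIntegral.integral_const_mul]
    linarith [hsplit ▸ h0]
  -- C ≤ R * B
  have hCB : C ≤ R * B := by
    rw [hB, ← intervalIntegral.integral_const_mul]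
    apply intervalIntegral.integral_mono_on hR.le
    · exact ((hfc.norm.pow 2).mul continuous_id).intervalIntegrable 0 R
    · exact (continuous_const.mul (hfc.norm.pow 2)).intervalIntegrable 0 R
    · intro x hx
      have h1 : 0 ≤ ‖f x‖^2 := by positivity
      nlinarith [hx.2]
  -- combine
  have hB4 : (1 / (4 * R)) * B = (c - c^2 * R) * B := by
    rw [hc]; field_simp; ring
  have : A ≥ c * B - c^2 * C := by nlinarith
  rw [ge_iff_le, hB4]
  nlinarith [sq_nonneg c, mul_le_mul_of_nonneg_left hCB (sq_nonneg c)]
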